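/- arXiv:math-ph/0610049 — 3 statements merged into one kernel-verified Lean document; each statement's English description precedes it below -/
import Mathlib

section
/- Laguerre limit of the Selberg integral at γ = 1, α = 1/2: ∫_{ℝ^m} Π_{1≤i<j≤m}(xⱼ² − xᵢ²)² · Π_k e^{−x_k²} dx₁…dx_m = m! · π^{m/2} · 2^{−m(m−1)} · Π_{j=1}^{m−1}(2j)!. -/
open Finset

noncomputable def gc (n : ℕ) : ℝ := (2 * n).factorial / (4 ^ n * n.factorial)

lemma gc_pos (n : ℕ) : 0 < gc n := by
  unfold gc; positivity

lemma gc_succ (n : ℕ) : gc (n + 1) = (2 * n + 1) / 2 * gc n := by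
  unfold gc
  have h1 : ((2 * (n + 1)).factorial : ℝ)
      = (2 * n + 2) * (2 * n + 1) * (2 * n).factorial := by
    have : 2 * (n + 1) = (2 * n + 1) + 1 := by ring
    rw [this, Nat.factorial_succ, Nat.factorial_succ]; push_cast; ring
  have h2 : ((n + 1).factorial : ℝ) = (n + 1) * n.factorial := by
    rw [Nat.factorial_succ]; push_cast; ring
  rw [h1, h2]
  have h3 : ((2 * n).factorial : ℝ) ≠ 0 := by positivity
  have h4 : (n.factorial : ℝ) ≠ 0 := by positivity
  have h5 : ((n : ℝ) + 1) ≠ 0 := by positivity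
  field_simp
  ring

noncomputable def TT (i j k : ℕ) : ℝ :=
  (i.choose k) * (j.choose k) * 4 ^ k * (k.factorial : ℝ) ^ 2 / (2 * k).factorial

noncomputable def UU (i j k : ℕ) : ℝ :=
  TT (i + 1) j k * ((k : ℝ) * (2 * k - 1)) / (i + 1)

lemma TT_eq_zero_of_lt {i k : ℕ} (h : i < k) (j : ℕ) : TT i j k = 0 := by
  unfold TT
  rw [Nat.choose_eq_zero_of_lt h]
  simp

lemma TT_eq_zero_of_lt' {j k : ℕ} (h : j < k) (i : ℕ) : TT i j k = 0 := by
  unfold TT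
  rw [Nat.choose_eq_zero_of_lt h (n := j)]
  simp

lemma cert (i j k : ℕ) :
    (2 * (i : ℝ) + 1) * TT (i + 1) j k - (2 * i + 2 * j + 1) * TT i j k
      = UU i j k - UU i j (k + 1) := by
  rcases lt_or_ge j k with hjk | hjk
  · have h1 : TT (i + 1) j k = 0 := TT_eq_zero_of_lt' hjk _
    have h2 : TT i j k = 0 := TT_eq_zero_of_lt' hjk _
    have h3 : TT (i + 1) j (k + 1) = 0 := TT_eq_zero_of_lt' (Nat.lt_succ_of_lt hjk) _
    unfold UU
    rw [h1, h2, h3]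
    ring
  · rcases lt_or_ge (i + 1) k with hik | hik
    · have h1 : TT (i + 1) j k = 0 := TT_eq_zero_of_lt hik j
      have h2 : TT i j k = 0 := TT_eq_zero_of_lt (by omega) j
      have h3 : TT (i + 1) j (k + 1) = 0 := TT_eq_zero_of_lt (by omega) j
      unfold UU
      rw [h1, h2, h3]
      ring
    · rcases eq_or_lt_of_le hik with hik1 | hik1
      · subst hik1
        have h2 : TT i j (i + 1) = 0 := TT_eq_zero_of_lt (by omega) j
        have h3 : TT (i + 1) j (i + 1 + 1) = 0 := TT_eq_zero_of_lt (by omega) j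
        unfold UU
        rw [h2, h3]
        have hi : ((i : ℝ) + 1) ≠ 0 := by positivity
        push_cast
        field_simp
        ring
      · -- main case : k ≤ i and k ≤ j
        have hki : k ≤ i := by omega
        obtain ⟨a, rfl⟩ : ∃ a, i = k + a := ⟨i - k, by omega⟩
        obtain ⟨b, rfl⟩ : ∃ b, j = k + b := ⟨j - k, by omega⟩
        have hk1 : ((k : ℝ) + 1) ≠ 0 := by positivity
        have hi1 : ((k : ℝ) + (a : ℝ) + 1) ≠ 0 := by positivity
        have ha1 : ((a : ℝ) + 1) ≠ 0 := by positivity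
        have e1 : ((k + a + 1).choose (k + 1) : ℝ) * (k + 1)
            = (k + a + 1).choose k * (a + 1) := by
          have h0 := Nat.choose_succ_right_eq (k + a + 1) k
          have h : k + a + 1 - k = a + 1 := by omega
          rw [h] at h0
          exact_mod_cast congrArg (Nat.cast : ℕ → ℝ) h0
        have e2 : ((k + b).choose (k + 1) : ℝ) * (k + 1)
            = (k + b).choose k * b := by
          have h0 := Nat.choose_succ_right_eq (k + b) k
          have h : k + b - k = b := by omega
          rw [h] at h0
          exact_mod_cast congrArg (Nat.cast : ℕ → ℝ) h0
        have e3 : ((k + a + 1).choose k : ℝ) * (a + 1)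
            = (k + a).choose k * ((k : ℝ) + a + 1) := by
          have f1 := Nat.choose_mul_factorial_mul_factorial (show k ≤ k + a by omega)
          have f2 := Nat.choose_mul_factorial_mul_factorial (show k ≤ k + a + 1 by omega)
          have h1 : k + a - k = a := by omega
          have h2 : k + a + 1 - k = a + 1 := by omega
          rw [h1] at f1; rw [h2] at f2
          have f1' : ((k + a).choose k : ℝ) * k.factorial * a.factorial
              = (k + a).factorial := by exact_mod_cast congrArg (Nat.cast : ℕ → ℝ) f1
          have f2' : ((k + a + 1).choose k : ℝ) * k.factorial * (a + 1).factorial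
              = (k + a + 1).factorial := by exact_mod_cast congrArg (Nat.cast : ℕ → ℝ) f2
          have hfa : ((a + 1).factorial : ℝ) = ((a : ℝ) + 1) * a.factorial := by
            rw [Nat.factorial_succ]; push_cast; ring
          have hfk : ((k + a + 1).factorial : ℝ)
              = ((k : ℝ) + a + 1) * (k + a).factorial := by
            have : k + a + 1 = (k + a) + 1 := rfl
            rw [this, Nat.factorial_succ]; push_cast; ring
          have hk : (k.factorial : ℝ) ≠ 0 := by positivity
          have ha : (a.factorial : ℝ) ≠ 0 := by positivity
          rw [hfa, hfk, ← f1'] at f2'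
          refine mul_right_cancel₀ (mul_ne_zero hk ha) ?_
          linear_combination f2'
        -- solve for A1, A2, B1
        have hA1 : ((k + a + 1).choose k : ℝ)
            = ((k + a).choose k : ℝ) * ((k : ℝ) + a + 1) / ((a : ℝ) + 1) := by
          field_simp; linarith [e3]
        have hA2 : ((k + a + 1).choose (k + 1) : ℝ)
            = ((k + a).choose k : ℝ) * ((k : ℝ) + a + 1) / ((k : ℝ) + 1) := by
          rw [eq_div_iff hk1]
          rw [e1, hA1]
          field_simp
        have hB1 : ((k + b).choose (k + 1) : ℝ)
            = ((k + b).choose k : ℝ) * (b : ℝ) / ((k : ℝ) + 1) := by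
          rw [eq_div_iff hk1]; exact e2
        simp only [UU, TT]
        have hf1 : ((2 * (k + 1)).factorial : ℝ)
            = (2 * (k : ℝ) + 2) * (2 * (k : ℝ) + 1) * (2 * k).factorial := by
          have : 2 * (k + 1) = (2 * k + 1) + 1 := by ring
          rw [this, Nat.factorial_succ, Nat.factorial_succ]; push_cast; ring
        have hf2 : ((k + 1).factorial : ℝ) = ((k : ℝ) + 1) * k.factorial := by
          rw [Nat.factorial_succ]; push_cast; ring
        rw [hf1, hf2, hA1, hA2, hB1]
        have h2k : ((2 * k).factorial : ℝ) ≠ 0 := by positivity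
        have hkf : (k.factorial : ℝ) ≠ 0 := by positivity
        have h2k1 : (2 * (k : ℝ) + 1) ≠ 0 := by positivity
        push_cast
        field_simp
        ring

lemma sumTT_base (i j : ℕ) :
    ∑ k ∈ range (i + 1), TT i j k = gc (i + j) / (gc i * gc j) := by
  induction i generalizing j with
  | zero =>
      simp only [zero_add, range_one, sum_singleton]
      unfold TT gc
      have h1 : (j.factorial : ℝ) ≠ 0 := by positivity
      have h2 : ((2 * j).factorial : ℝ) ≠ 0 := by positivity
      simp [Nat.choose]
      field_simp
  | succ i ih =>
      have tele : ∑ k ∈ range (i + 2),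
          ((2 * (i : ℝ) + 1) * TT (i + 1) j k - (2 * i + 2 * j + 1) * TT i j k)
          = UU i j 0 - UU i j (i + 2) := by
        simp only [cert]
        exact Finset.sum_range_sub' (fun k => UU i j k) (i + 2)
      have hU0 : UU i j 0 = 0 := by unfold UU; push_cast; ring
      have hU2 : UU i j (i + 2) = 0 := by
        unfold UU
        rw [TT_eq_zero_of_lt (by omega) j]
        ring
      rw [hU0, hU2, sub_zero] at tele
      rw [Finset.sum_sub_distrib, ← Finset.mul_sum, ← Finset.mul_sum] at tele
      have hrange : ∑ k ∈ range (i + 2), TT i j k = ∑ k ∈ range (i + 1), TT i j k := by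
        rw [Finset.sum_range_succ, TT_eq_zero_of_lt (by omega) j, add_zero]
      rw [hrange, ih j] at tele
      have h2i : (2 * (i : ℝ) + 1) ≠ 0 := by positivity
      have hgi : gc i ≠ 0 := (gc_pos i).ne'
      have hgj : gc j ≠ 0 := (gc_pos j).ne'
      have hgij : gc (i + j) ≠ 0 := (gc_pos (i + j)).ne'
      have hgs : gc (i + 1) = (2 * (i : ℝ) + 1) / 2 * gc i := gc_succ i
      have hgs2 : gc (i + 1 + j) = (2 * ((i : ℝ) + j) + 1) / 2 * gc (i + j) := by
        have : i + 1 + j = (i + j) + 1 := by ring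
        rw [this, gc_succ]; push_cast; ring_nf
      have : ∑ k ∈ range (i + 2), TT (i + 1) j k
          = (2 * (i : ℝ) + 2 * j + 1) / (2 * (i : ℝ) + 1) * (gc (i + j) / (gc i * gc j)) := by
        field_simp at tele ⊢
        linarith [tele]
      rw [this, hgs, hgs2]
      have hgi1 : ((2 * (i : ℝ) + 1) / 2 * gc i) ≠ 0 := by
        apply mul_ne_zero _ hgi
        positivity
      field_simp

lemma sumTT (i j N : ℕ) (h : i < N) :
    ∑ k ∈ range N, TT i j k = gc (i + j) / (gc i * gc j) := by
  rw [← sumTT_base i j]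
  symm
  apply Finset.sum_subset
  · exact Finset.range_subset_range.2 h
  · intro k _ hk
    exact TT_eq_zero_of_lt (by simp at hk; omega) j

lemma detG (m : ℕ) :
    Matrix.det (Matrix.of fun i j : Fin m => gc ((i : ℕ) + (j : ℕ)))
      = ∏ k ∈ range m, ((2 * k).factorial : ℝ) / 4 ^ k := by
  classical
  set L : Matrix (Fin m) (Fin m) ℝ :=
    Matrix.of fun i k : Fin m =>
      gc i * ((i : ℕ).choose k) * ((k : ℕ).factorial : ℝ) * 4 ^ (k : ℕ)
        / ((2 * (k : ℕ)).factorial) with hL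
  set D : Matrix (Fin m) (Fin m) ℝ :=
    Matrix.diagonal fun k : Fin m => ((2 * (k : ℕ)).factorial : ℝ) / 4 ^ (k : ℕ) with hD
  have hfact : Matrix.of (fun i j : Fin m => gc ((i : ℕ) + (j : ℕ))) = L * D * L.transpose := by
    ext i j
    rw [Matrix.mul_apply]
    simp only [Matrix.transpose_apply]
    have hterm : ∀ k : Fin m,
        (L * D) i k * L j k = gc i * gc j * TT (i : ℕ) (j : ℕ) (k : ℕ) := by
      intro k
      rw [Matrix.mul_diagonal]
      simp only [hL, hD, Matrix.of_apply, TT]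
      have h1 : ((2 * (k : ℕ)).factorial : ℝ) ≠ 0 := by positivity
      have h2 : ((4 : ℝ) ^ (k : ℕ)) ≠ 0 := by positivity
      field_simp
    simp only [hterm]
    rw [← Finset.mul_sum]
    have hsum : ∑ k : Fin m, TT (i : ℕ) (j : ℕ) (k : ℕ)
        = ∑ k ∈ range m, TT (i : ℕ) (j : ℕ) k := Fin.sum_univ_eq_sum_range _ m
    rw [hsum, sumTT _ _ _ i.isLt]
    have hgi : gc (i : ℕ) ≠ 0 := (gc_pos _).ne'
    have hgj : gc (j : ℕ) ≠ 0 := (gc_pos _).ne'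
    field_simp
    simp only [Matrix.of_apply]
  rw [hfact]
  have hLtri : L.BlockTriangular OrderDual.toDual := by
    intro i j hij
    simp only [OrderDual.toDual_lt_toDual] at hij
    simp only [hL, Matrix.of_apply]
    rw [Nat.choose_eq_zero_of_lt (by exact_mod_cast hij)]
    ring
  have hdetL : L.det = 1 := by
    rw [Matrix.det_of_lowerTriangular L hLtri]
    apply Finset.prod_eq_one
    intro k _
    simp only [hL, Matrix.of_apply, Nat.choose_self]
    unfold gc
    have h1 : ((2 * (k : ℕ)).factorial : ℝ) ≠ 0 := by positivity
    have h2 : (((k : ℕ)).factorial : ℝ) ≠ 0 := by positivity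
    field_simp
    ring
  rw [Matrix.det_mul, Matrix.det_mul, hdetL, Matrix.det_transpose, hdetL,
    Matrix.det_diagonal]
  rw [Fin.prod_univ_eq_prod_range (fun k => ((2 * k).factorial : ℝ) / 4 ^ k) m]
  ring

open MeasureTheory Real

lemma integrable_pow_exp (n : ℕ) :
    Integrable (fun x : ℝ => x ^ n * Real.exp (-x ^ 2)) := by
  have hs : (-1 : ℝ) < (n : ℝ) := lt_of_lt_of_le neg_one_lt_zero (Nat.cast_nonneg n)
  have h := integrable_rpow_mul_exp_neg_mul_sq (b := 1) one_pos hs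
  simpa [Real.rpow_natCast, neg_mul, one_mul] using h

lemma moment_gauss (n : ℕ) :
    ∫ x : ℝ, x ^ (2 * n) * Real.exp (-x ^ 2) = Real.sqrt π * gc n := by
  induction n with
  | zero =>
      have h0 : ∫ x : ℝ, Real.exp (-x ^ 2) = Real.sqrt π := by
        simpa using integral_gaussian 1
      simp only [mul_zero, pow_zero, one_mul, h0]
      unfold gc
      norm_num
  | succ n ih =>
      have hu : ∀ x : ℝ, HasDerivAt (fun y : ℝ => y ^ (2 * n + 1))
          (((2 * n + 1 : ℕ) : ℝ) * x ^ (2 * n)) x := by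
        intro x
        simpa using hasDerivAt_pow (2 * n + 1) x
      have hv : ∀ x : ℝ, HasDerivAt (fun y : ℝ => Real.exp (-y ^ 2))
          (Real.exp (-x ^ 2) * (-(2 * x))) x := by
        intro x
        have h1 : HasDerivAt (fun y : ℝ => -y ^ 2) (-(2 * x)) x := by
          simpa using (hasDerivAt_pow 2 x).fun_neg
        exact (Real.hasDerivAt_exp _).comp x h1
      have key := integral_mul_deriv_eq_deriv_mul_of_integrable (fun x _ => hu x) (fun x _ => hv x) ?_ ?_ ?_
      · have h1 : ∫ x : ℝ, x ^ (2 * n + 1) * (Real.exp (-x ^ 2) * (-(2 * x)))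
            = (-2) * ∫ x : ℝ, x ^ (2 * (n + 1)) * Real.exp (-x ^ 2) := by
          rw [← integral_const_mul]
          congr 1
          funext x
          ring
        have h2 : ∫ x : ℝ, ((2 * n + 1 : ℕ) : ℝ) * x ^ (2 * n) * Real.exp (-x ^ 2)
            = ((2 * n + 1 : ℕ) : ℝ) * (Real.sqrt π * gc n) := by
          rw [← ih, ← integral_const_mul]
          congr 1
          funext x
          ring
        rw [h1, h2] at key
        have h4 : ∫ x : ℝ, x ^ (2 * (n + 1)) * Real.exp (-x ^ 2)
            = ((2 * n + 1 : ℕ) : ℝ) / 2 * (Real.sqrt π * gc n) := by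
          push_cast at key ⊢
          linarith
        rw [h4, gc_succ]
        push_cast
        ring
      · simp only [Pi.mul_def]
        have h5 : (fun x : ℝ => x ^ (2 * n + 1) * (Real.exp (-x ^ 2) * (-(2 * x))))
            = fun x : ℝ => (-2) * (x ^ (2 * (n + 1)) * Real.exp (-x ^ 2)) := by
          funext x; ring
        rw [h5]
        exact (integrable_pow_exp (2 * (n + 1))).const_mul _
      · simp only [Pi.mul_def]
        have h6 : (fun x : ℝ => ((2 * n + 1 : ℕ) : ℝ) * x ^ (2 * n) * Real.exp (-x ^ 2))
            = fun x : ℝ => ((2 * n + 1 : ℕ) : ℝ) * (x ^ (2 * n) * Real.exp (-x ^ 2)) := by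
          funext x; ring
        rw [h6]
        exact (integrable_pow_exp (2 * n)).const_mul _
      · simp only [Pi.mul_def]
        exact integrable_pow_exp (2 * n + 1)


section Aux
variable {m : ℕ}

lemma sign_sq (σ : Equiv.Perm (Fin m)) :
    ((Equiv.Perm.sign σ : ℤ) : ℝ) * ((Equiv.Perm.sign σ : ℤ) : ℝ) = 1 := by
  rw [← Int.cast_mul, ← Units.val_mul, Int.units_mul_self]
  simp

lemma det_vdm_expand (v : Fin m → ℝ) :
    (Matrix.vandermonde v).det
      = ∑ σ : Equiv.Perm (Fin m),
          ((Equiv.Perm.sign σ : ℤ) : ℝ) * ∏ i, v i ^ ((σ i : ℕ)) := by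
  rw [Matrix.det_apply']
  refine Fintype.sum_equiv (Equiv.inv (Equiv.Perm (Fin m))) _ _ (fun σ => ?_)
  simp only [Equiv.inv_apply, Equiv.Perm.sign_inv, Matrix.vandermonde_apply]
  congr 1
  rw [← Equiv.prod_comp σ (fun j => v j ^ ((σ⁻¹ j : Fin m) : ℕ))]
  apply Finset.prod_congr rfl
  intro i _
  rw [Equiv.Perm.inv_def, Equiv.symm_apply_apply]

lemma double_sum (f : ℕ → ℝ) :
    ∑ σ : Equiv.Perm (Fin m), ∑ τ : Equiv.Perm (Fin m),
        ((Equiv.Perm.sign σ : ℤ) : ℝ) * ((Equiv.Perm.sign τ : ℤ) : ℝ)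
          * ∏ i, f ((σ i : ℕ) + (τ i : ℕ))
      = (m.factorial : ℝ)
          * (Matrix.of fun i j : Fin m => f ((i : ℕ) + (j : ℕ))).det := by
  have inner : ∀ σ : Equiv.Perm (Fin m),
      ∑ τ : Equiv.Perm (Fin m),
        ((Equiv.Perm.sign σ : ℤ) : ℝ) * ((Equiv.Perm.sign τ : ℤ) : ℝ)
          * ∏ i, f ((σ i : ℕ) + (τ i : ℕ))
      = (Matrix.of fun i j : Fin m => f ((i : ℕ) + (j : ℕ))).det := by
    intro σ
    rw [Matrix.det_apply']
    refine Fintype.sum_equiv (Equiv.mulRight σ⁻¹) _ _ (fun ρ => ?_)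
    simp only [Equiv.coe_mulRight]
    have hsign : ((Equiv.Perm.sign (ρ * σ⁻¹) : ℤ) : ℝ)
        = ((Equiv.Perm.sign σ : ℤ) : ℝ) * ((Equiv.Perm.sign ρ : ℤ) : ℝ) := by
      rw [Equiv.Perm.sign_mul, Equiv.Perm.sign_inv]
      push_cast
      ring
    have hprod : ∏ x : Fin m, (Matrix.of fun i j : Fin m => f ((i : ℕ) + (j : ℕ)))
        ((ρ * σ⁻¹) x) x = ∏ i, f ((σ i : ℕ) + (ρ i : ℕ)) := by
      rw [← Equiv.prod_comp σ (fun x => (Matrix.of fun i j : Fin m => f ((i : ℕ) + (j : ℕ)))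
        ((ρ * σ⁻¹) x) x)]
      apply Finset.prod_congr rfl
      intro i _
      simp only [Equiv.Perm.mul_apply, Equiv.Perm.inv_def, Equiv.symm_apply_apply, Matrix.of_apply]
      rw [Nat.add_comm]
    rw [hsign, hprod]
  rw [Finset.sum_congr rfl (fun σ _ => inner σ)]
  rw [Finset.sum_const, Finset.card_univ, Fintype.card_perm, Fintype.card_fin]
  simp [nsmul_eq_mul]

lemma final_prod (m : ℕ) :
    ∏ k ∈ range m, ((2 * k).factorial : ℝ) / 4 ^ k
      = (∏ j ∈ Finset.Icc 1 (m - 1), ((2 * j).factorial : ℝ)) / 2 ^ (m * (m - 1)) := by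
  rw [Finset.prod_div_distrib]
  have h1 : ∏ k ∈ range m, ((2 * k).factorial : ℝ)
      = ∏ j ∈ Finset.Icc 1 (m - 1), ((2 * j).factorial : ℝ) := by
    rcases Nat.eq_zero_or_pos m with rfl | hm
    · simp
    · have h0 : (0 : ℕ) ∈ range m := mem_range.2 hm
      rw [← Finset.mul_prod_erase _ _ h0]
      have herase : (range m).erase 0 = Finset.Icc 1 (m - 1) := by
        ext x
        simp only [mem_erase, mem_range, Finset.mem_Icc]
        omega
      rw [herase]
      norm_num
  have h2 : ∏ k ∈ range m, ((4 : ℝ)) ^ k = 2 ^ (m * (m - 1)) := by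
    rw [Finset.prod_pow_eq_pow_sum]
    have h4 : (4 : ℝ) = 2 ^ 2 := by norm_num
    rw [h4, ← pow_mul]
    congr 1
    have := Finset.sum_range_id_mul_two m
    omega
  rw [h1, h2]

end Aux


/-- Laguerre limit of the Selberg integral with `γ = 1`, `α = 1/2`:
`∫_{ℝ^m} Π_{i<j}(xⱼ² - xᵢ²)² Π_k e^{-x_k²} dx = m! π^{m/2} 2^{-m(m-1)} Π_{j=1}^{m-1}(2j)!`. -/
theorem selberg_laguerre_half (m : ℕ) :
    (∫ x : Fin m → ℝ,
        (∏ i : Fin m, ∏ j ∈ Finset.Ioi i, ((x j) ^ 2 - (x i) ^ 2) ^ 2) *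
          ∏ k : Fin m, Real.exp (-(x k) ^ 2))
      = (m.factorial : ℝ) * Real.sqrt Real.pi ^ m *
          (∏ j ∈ Finset.Icc 1 (m - 1), ((2 * j).factorial : ℝ)) / 2 ^ (m * (m - 1)) := by
  classical
  -- pointwise rewriting of the integrand
  have hpt : ∀ x : Fin m → ℝ,
      (∏ i : Fin m, ∏ j ∈ Finset.Ioi i, ((x j) ^ 2 - (x i) ^ 2) ^ 2) *
          ∏ k : Fin m, Real.exp (-(x k) ^ 2)
        = ∑ p : Equiv.Perm (Fin m) × Equiv.Perm (Fin m),
            (((Equiv.Perm.sign p.1 : ℤ) : ℝ) * ((Equiv.Perm.sign p.2 : ℤ) : ℝ))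
              * ∏ i : Fin m,
                  (x i ^ (2 * ((p.1 i : ℕ) + (p.2 i : ℕ))) * Real.exp (-(x i) ^ 2)) := by
    intro x
    have h1 : (∏ i : Fin m, ∏ j ∈ Finset.Ioi i, ((x j) ^ 2 - (x i) ^ 2) ^ 2)
        = (Matrix.vandermonde (fun i => x i ^ 2)).det ^ 2 := by
      rw [Matrix.det_vandermonde]
      simp only [Finset.prod_pow]
    rw [h1, sq, det_vdm_expand, Finset.sum_mul_sum, Fintype.sum_prod_type]
    rw [Finset.sum_mul]
    apply Finset.sum_congr rfl
    intro σ _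
    rw [Finset.sum_mul]
    apply Finset.sum_congr rfl
    intro τ _
    have h2 : ∏ i : Fin m,
        (x i ^ (2 * ((σ i : ℕ) + (τ i : ℕ))) * Real.exp (-(x i) ^ 2))
        = (∏ i : Fin m, (x i ^ 2) ^ (σ i : ℕ))
          * (∏ i : Fin m, (x i ^ 2) ^ (τ i : ℕ))
          * ∏ i : Fin m, Real.exp (-(x i) ^ 2) := by
      rw [← Finset.prod_mul_distrib, ← Finset.prod_mul_distrib]
      apply Finset.prod_congr rfl
      intro i _
      rw [← pow_mul, ← pow_mul, ← pow_add]
      ring_nf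
    rw [h2]
    ring
  simp only [hpt]
  rw [integral_finset_sum]
  · -- value of each term
    have hterm : ∀ p : Equiv.Perm (Fin m) × Equiv.Perm (Fin m),
        (∫ x : Fin m → ℝ,
          (((Equiv.Perm.sign p.1 : ℤ) : ℝ) * ((Equiv.Perm.sign p.2 : ℤ) : ℝ))
            * ∏ i : Fin m,
                (x i ^ (2 * ((p.1 i : ℕ) + (p.2 i : ℕ))) * Real.exp (-(x i) ^ 2)))
        = (((Equiv.Perm.sign p.1 : ℤ) : ℝ) * ((Equiv.Perm.sign p.2 : ℤ) : ℝ))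
            * (Real.sqrt Real.pi ^ m * ∏ i : Fin m, gc ((p.1 i : ℕ) + (p.2 i : ℕ))) := by
      intro p
      rw [integral_const_mul]
      congr 1
      rw [integral_fintype_prod_volume_eq_prod (ι := Fin m)
        (f := fun i y => y ^ (2 * ((p.1 i : ℕ) + (p.2 i : ℕ))) * Real.exp (-y ^ 2))]
      rw [Finset.prod_congr rfl (fun i _ => moment_gauss ((p.1 i : ℕ) + (p.2 i : ℕ)))]
      rw [Finset.prod_mul_distrib, Finset.prod_const, Finset.card_univ, Fintype.card_fin]
    rw [Finset.sum_congr rfl (fun p _ => hterm p)]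
    have hsum : ∑ p : Equiv.Perm (Fin m) × Equiv.Perm (Fin m),
        (((Equiv.Perm.sign p.1 : ℤ) : ℝ) * ((Equiv.Perm.sign p.2 : ℤ) : ℝ))
          * (Real.sqrt Real.pi ^ m * ∏ i : Fin m, gc ((p.1 i : ℕ) + (p.2 i : ℕ)))
        = Real.sqrt Real.pi ^ m * ∑ σ : Equiv.Perm (Fin m), ∑ τ : Equiv.Perm (Fin m),
            ((Equiv.Perm.sign σ : ℤ) : ℝ) * ((Equiv.Perm.sign τ : ℤ) : ℝ)
              * ∏ i : Fin m, gc ((σ i : ℕ) + (τ i : ℕ)) := by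
      rw [Finset.mul_sum, Fintype.sum_prod_type]
      apply Finset.sum_congr rfl
      intro σ _
      rw [Finset.mul_sum]
      apply Finset.sum_congr rfl
      intro τ _
      ring
    rw [hsum, double_sum, detG, final_prod]
    ring
  · -- integrability of each term
    intro p _
    apply Integrable.const_mul
    apply Integrable.fintype_prod (f := fun i y =>
      y ^ (2 * ((p.1 i : ℕ) + (p.2 i : ℕ))) * Real.exp (-y ^ 2))
    intro i
    exact integrable_pow_exp _
end

section
/- Laguerre limit of the Selberg integral at γ = 1, α = 3/2: ∫_{ℝ^m} Π_{1≤i<j≤m}(xⱼ² − xᵢ²)² · Π_k x_k² e^{−x_k²} dx₁…dx_m = m! · π^{m/2} · 2^{−m²} · Π_{j=1}^{m}(2j−1)!. -/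
open MeasureTheory Finset

namespace SelbergAux3H

open Real Matrix


lemma integrable_pow_exp (n : ℕ) :
    Integrable fun x : ℝ => x ^ n * Real.exp (-x ^ 2) := by
  have h := integrable_rpow_mul_exp_neg_mul_sq (b := 1) one_pos
    (s := (n : ℝ)) (lt_of_lt_of_le (by norm_num) (Nat.cast_nonneg n))
  simpa [Real.rpow_natCast, neg_one_mul] using h

lemma moment (n : ℕ) :
    ∫ x : ℝ, x ^ (2 * n) * Real.exp (-x ^ 2) = Real.Gamma (n + 1 / 2) := by
  have h0 : (∫ x : ℝ, x ^ (2 * n) * Real.exp (-x ^ 2))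
      = 2 * ∫ x in Set.Ioi (0:ℝ), x ^ (2 * n) * Real.exp (-x ^ 2) := by
    rw [← integral_comp_abs (f := fun y : ℝ => y ^ (2 * n) * Real.exp (-y ^ 2))]
    congr 1
    ext x
    rw [pow_mul, pow_mul, sq_abs]
  rw [h0]
  have h2 : (∫ y in Set.Ioi (0:ℝ), y ^ (2 * n) * Real.exp (-y ^ 2))
      = (1 / 2) * Real.Gamma ((((2 * n : ℕ) : ℝ) + 1) / 2) := by
    have h := integral_rpow_mul_exp_neg_rpow (p := 2) (q := ((2 * n : ℕ) : ℝ)) two_pos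
      (lt_of_lt_of_le (by norm_num) (Nat.cast_nonneg _))
    rw [← h]
    refine setIntegral_congr_fun measurableSet_Ioi (fun x hx => ?_)
    rw [Real.rpow_natCast]
    norm_num
  rw [h2]
  rw [show ((((2 * n : ℕ) : ℝ) + 1) / 2) = (n : ℝ) + 1 / 2 by push_cast; ring]
  ring

lemma Gamma_half (n : ℕ) :
    Real.Gamma ((n : ℝ) + 1 / 2)
      = Real.sqrt Real.pi * ((2 * n).factorial : ℝ) / (4 ^ n * (n.factorial : ℝ)) := by
  induction n with
  | zero => simpa using Real.Gamma_one_half_eq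
  | succ n ih =>
    have harg : ((n + 1 : ℕ) : ℝ) + 1 / 2 = ((n : ℝ) + 1 / 2) + 1 := by push_cast; ring
    rw [harg, Real.Gamma_add_one (by positivity), ih]
    have e1 : ((2 * (n + 1)).factorial : ℝ)
        = (2 * (n : ℝ) + 2) * ((2 * (n : ℝ) + 1) * ((2 * n).factorial : ℝ)) := by
      rw [show 2 * (n + 1) = (2 * n + 1) + 1 by ring, Nat.factorial_succ, Nat.factorial_succ]
      push_cast; ring
    have e2 : (((n + 1).factorial : ℕ) : ℝ) = ((n : ℝ) + 1) * (n.factorial : ℝ) := by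
      rw [Nat.factorial_succ]; push_cast; ring
    rw [e1, e2]
    have h4 : (0:ℝ) < 4 ^ n := by positivity
    have hf : (0:ℝ) < (n.factorial : ℝ) := by exact_mod_cast n.factorial_pos
    field_simp
    ring

lemma Gamma_prod_pochhammer (c : ℝ) (hc : 0 < c) (i : ℕ) :
    Real.Gamma ((i : ℝ) + c) = (∏ t ∈ Finset.range i, (c + t)) * Real.Gamma c := by
  induction i with
  | zero => simp
  | succ i ih =>
    have harg : ((i + 1 : ℕ) : ℝ) + c = ((i : ℝ) + c) + 1 := by push_cast; ring
    rw [harg, Real.Gamma_add_one (by positivity), ih, Finset.prod_range_succ]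
    ring

lemma nat_prod_sub : ∀ n : ℕ, ∏ k ∈ Finset.range n, (n - k) = n.factorial
  | 0 => by simp
  | n + 1 => by
    rw [Finset.prod_range_succ']
    simp only [Nat.succ_sub_succ, Nat.sub_zero]
    rw [nat_prod_sub n, Nat.factorial_succ, mul_comm]

lemma perm_sum (m : ℕ) (g : ℕ → ℝ) :
    ∑ σ : Equiv.Perm (Fin m), ∑ τ : Equiv.Perm (Fin m),
      ((Equiv.Perm.sign σ : ℤ) : ℝ) * ((Equiv.Perm.sign τ : ℤ) : ℝ) *
        ∏ i : Fin m, g ((σ i : ℕ) + (τ i : ℕ) + 1)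
      = (m.factorial : ℝ) * (Matrix.of fun i j : Fin m => g ((i : ℕ) + (j : ℕ) + 1)).det := by
  have key : ∀ σ : Equiv.Perm (Fin m),
      (∑ τ : Equiv.Perm (Fin m), ((Equiv.Perm.sign σ : ℤ) : ℝ) * ((Equiv.Perm.sign τ : ℤ) : ℝ) *
        ∏ i : Fin m, g ((σ i : ℕ) + (τ i : ℕ) + 1))
      = (Matrix.of fun i j : Fin m => g ((i : ℕ) + (j : ℕ) + 1)).det := by
    intro σ
    rw [Matrix.det_apply']
    rw [← Equiv.sum_comp (Equiv.mulRight σ)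
      (fun τ : Equiv.Perm (Fin m) => ((Equiv.Perm.sign σ : ℤ) : ℝ) * ((Equiv.Perm.sign τ : ℤ) : ℝ) *
        ∏ i : Fin m, g ((σ i : ℕ) + (τ i : ℕ) + 1))]
    refine Finset.sum_congr rfl fun pp _ => ?_
    have hsign : ((Equiv.Perm.sign σ : ℤ) : ℝ) *
        ((Equiv.Perm.sign (Equiv.mulRight σ pp) : ℤ) : ℝ) = ((Equiv.Perm.sign pp : ℤ) : ℝ) := by
      have : Equiv.mulRight σ pp = pp * σ := rfl
      rw [this, Equiv.Perm.sign_mul]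
      push_cast
      have hs : ((Equiv.Perm.sign σ : ℤ) : ℝ) * ((Equiv.Perm.sign σ : ℤ) : ℝ) = 1 := by
        rcases Int.units_eq_one_or (Equiv.Perm.sign σ) with h | h <;> rw [h] <;> norm_num
      ring_nf
      rw [sq, hs, one_mul]
    rw [hsign]
    have hprod : (∏ i : Fin m, g ((σ i : ℕ) + ((Equiv.mulRight σ pp) i : ℕ) + 1))
        = ∏ i : Fin m, g ((i : ℕ) + (pp i : ℕ) + 1) := by
      rw [← Equiv.prod_comp σ (fun j : Fin m => g ((j : ℕ) + (pp j : ℕ) + 1))]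
      rfl
    rw [hprod]
    congr 1
    refine Finset.prod_congr rfl fun i _ => ?_
    rw [Matrix.of_apply]
    congr 1
    omega
  calc ∑ σ : Equiv.Perm (Fin m), ∑ τ : Equiv.Perm (Fin m),
      ((Equiv.Perm.sign σ : ℤ) : ℝ) * ((Equiv.Perm.sign τ : ℤ) : ℝ) *
        ∏ i : Fin m, g ((σ i : ℕ) + (τ i : ℕ) + 1)
      = ∑ _σ : Equiv.Perm (Fin m),
          (Matrix.of fun i j : Fin m => g ((i : ℕ) + (j : ℕ) + 1)).det :=
        Finset.sum_congr rfl fun σ _ => key σ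
    _ = (m.factorial : ℝ) * (Matrix.of fun i j : Fin m => g ((i : ℕ) + (j : ℕ) + 1)).det := by
        rw [Finset.sum_const, Finset.card_univ, Fintype.card_perm, Fintype.card_fin,
          nsmul_eq_mul]

lemma det_hankel (m : ℕ) :
    (Matrix.of fun i j : Fin m => Real.Gamma ((i : ℝ) + (j : ℝ) + 3 / 2)).det
      = (∏ i : Fin m, ∏ j ∈ Finset.Ioi i, ((j : ℝ) - (i : ℝ))) *
        ∏ j : Fin m, Real.Gamma ((j : ℝ) + 3 / 2) := by
  classical
  set p : Fin m → Polynomial ℝ :=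
    fun j => ∏ t ∈ Finset.range (j : ℕ), (Polynomial.X + Polynomial.C (t : ℝ)) with hp
  have hmonic : ∀ j : Fin m, (p j).Monic := fun j =>
    Polynomial.monic_prod_of_monic _ _ fun t _ => Polynomial.monic_X_add_C _
  have hdeg : ∀ j : Fin m, (p j).natDegree = (j : ℕ) := by
    intro j
    show (∏ t ∈ Finset.range (j : ℕ), (Polynomial.X + Polynomial.C (t : ℝ))).natDegree = (j : ℕ)
    rw [Polynomial.natDegree_prod (s := Finset.range (j : ℕ))
      (f := fun t : ℕ => Polynomial.X + Polynomial.C (t : ℝ))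
      (fun t _ => (Polynomial.monic_X_add_C (t : ℝ)).ne_zero)]
    simp only [Polynomial.natDegree_X_add_C]
    simp
  have heval : ∀ (v : ℝ) (j : Fin m),
      (p j).eval v = ∏ t ∈ Finset.range (j : ℕ), (v + t) := by
    intro v j
    rw [hp]
    simp [Polynomial.eval_prod]
  have hA : (Matrix.of fun i j : Fin m => Real.Gamma ((i : ℝ) + (j : ℝ) + 3 / 2))
      = (Matrix.of fun i j : Fin m => (p i).eval ((j : ℝ) + 3 / 2))
        * Matrix.diagonal (fun j : Fin m => Real.Gamma ((j : ℝ) + 3 / 2)) := by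
    ext i j
    rw [Matrix.mul_diagonal]
    simp only [Matrix.of_apply]
    rw [heval, ← Gamma_prod_pochhammer ((j : ℝ) + 3 / 2) (by positivity) i]
    ring_nf
  rw [hA, Matrix.det_mul, Matrix.det_diagonal]
  congr 1
  have hT : (Matrix.of fun i j : Fin m => (p i).eval ((j : ℝ) + 3 / 2))
      = (Matrix.of fun i j : Fin m => (p j).eval (((i : ℝ) + 3 / 2)))ᵀ := by
    ext i j; rfl
  rw [hT, Matrix.det_transpose,
    ← Matrix.det_eval_matrixOfPolynomials_eq_det_vandermonde
      (fun i : Fin m => (i : ℝ) + 3 / 2) p hdeg hmonic,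
    Matrix.det_vandermonde]
  refine Finset.prod_congr rfl fun i _ => Finset.prod_congr rfl fun j _ => ?_
  ring

lemma vandermonde_nat (m : ℕ) :
    (∏ i : Fin m, ∏ j ∈ Finset.Ioi i, ((j : ℝ) - (i : ℝ)))
      = ∏ j : Fin m, ((j : ℕ).factorial : ℝ) := by
  rw [Finset.prod_comm' (t' := (Finset.univ : Finset (Fin m)))
    (s' := fun j => Finset.Iio j) (by intro x y; simp [and_comm])]
  refine Finset.prod_congr rfl fun j _ => ?_
  have h1 : (∏ i ∈ Finset.Iio j, ((j : ℝ) - (i : ℝ)))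
      = ∏ k ∈ Finset.range (j : ℕ), ((j : ℝ) - (k : ℕ)) := by
    refine Finset.prod_nbij' (fun i => (i : ℕ))
      (fun k => if h : k < m then ⟨k, h⟩ else j) ?_ ?_ ?_ ?_ ?_
    · intro a ha; simpa [Finset.mem_range] using (Finset.mem_Iio.mp ha)
    · intro k hk
      have hkj : k < (j : ℕ) := Finset.mem_range.mp hk
      have hkm : k < m := lt_trans hkj j.isLt
      simp only [dif_pos hkm]
      exact Finset.mem_Iio.mpr (by simpa [Fin.lt_def] using hkj)
    · intro a ha
      have : (a : ℕ) < m := a.isLt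
      simp [this]
    · intro k hk
      have hkj : k < (j : ℕ) := Finset.mem_range.mp hk
      have hkm : k < m := lt_trans hkj j.isLt
      simp [hkm]
    · intro a _; rfl
  rw [h1]
  have h2 : (∏ k ∈ Finset.range (j : ℕ), ((j : ℝ) - (k : ℕ)))
      = ∏ k ∈ Finset.range (j : ℕ), (((j : ℕ) - k : ℕ) : ℝ) := by
    refine Finset.prod_congr rfl fun k hk => ?_
    have : k ≤ (j : ℕ) := le_of_lt (Finset.mem_range.mp hk)
    rw [Nat.cast_sub this]
  rw [h2, ← Nat.cast_prod, nat_prod_sub]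

lemma final_prod (m : ℕ) :
    (∏ j ∈ Finset.range m, ((j.factorial : ℝ) * Real.Gamma ((j : ℝ) + 3 / 2)))
      = Real.sqrt Real.pi ^ m * (∏ j ∈ Finset.Icc 1 m, (((2 * j - 1).factorial : ℕ) : ℝ))
          / 2 ^ (m ^ 2) := by
  induction m with
  | zero => simp
  | succ m ih =>
    rw [Finset.prod_range_succ, ih, Finset.prod_Icc_succ_top (Nat.le_add_left 1 m)]
    have hg : Real.Gamma ((m : ℝ) + 3 / 2)
        = Real.sqrt Real.pi * ((2 * (m + 1)).factorial : ℝ)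
            / (4 ^ (m + 1) * ((m + 1).factorial : ℝ)) := by
      have h := Gamma_half (m + 1)
      rw [show (((m + 1 : ℕ)) : ℝ) + 1 / 2 = (m : ℝ) + 3 / 2 by push_cast; ring] at h
      exact h
    rw [hg]
    have e0 : 2 * (m + 1) - 1 = 2 * m + 1 := by omega
    rw [e0]
    have e1 : ((2 * (m + 1)).factorial : ℝ)
        = (2 * (m : ℝ) + 2) * ((2 * m + 1).factorial : ℝ) := by
      rw [show 2 * (m + 1) = (2 * m + 1) + 1 by ring, Nat.factorial_succ]
      push_cast; ring
    have e2 : (((m + 1).factorial : ℕ) : ℝ) = ((m : ℝ) + 1) * (m.factorial : ℝ) := by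
      rw [Nat.factorial_succ]; push_cast; ring
    have e3 : (2 : ℝ) ^ ((m + 1) ^ 2) = 2 ^ (m ^ 2) * 2 ^ (2 * m + 1) := by
      rw [← pow_add, show m ^ 2 + (2 * m + 1) = (m + 1) ^ 2 by ring]
    have e4 : (4 : ℝ) ^ (m + 1) = 2 ^ (2 * m + 2) := by
      rw [show (4:ℝ) = 2 ^ 2 by norm_num, ← pow_mul, show 2 * (m + 1) = 2 * m + 2 by ring]
    rw [e1, e2, e3, e4]
    have hm : (0:ℝ) < (m : ℝ) + 1 := by positivity
    have hf : (0:ℝ) < (m.factorial : ℝ) := by exact_mod_cast m.factorial_pos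
    have h2 : (0:ℝ) < 2 ^ (2 * m + 2) := by positivity
    field_simp
    ring

lemma integrand_eq (m : ℕ) (x : Fin m → ℝ) :
    (∏ i : Fin m, ∏ j ∈ Finset.Ioi i, ((x j) ^ 2 - (x i) ^ 2) ^ 2) *
        ∏ k : Fin m, (x k) ^ 2 * Real.exp (-(x k) ^ 2)
    = ∑ σ : Equiv.Perm (Fin m), ∑ τ : Equiv.Perm (Fin m),
        ((Equiv.Perm.sign σ : ℤ) : ℝ) * ((Equiv.Perm.sign τ : ℤ) : ℝ) *
          ∏ k : Fin m, (x k ^ (2 * ((σ k : ℕ) + (τ k : ℕ) + 1)) * Real.exp (-(x k) ^ 2)) := by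
  classical
  have h1 : (∏ i : Fin m, ∏ j ∈ Finset.Ioi i, ((x j) ^ 2 - (x i) ^ 2) ^ 2)
      = (∏ i : Fin m, ∏ j ∈ Finset.Ioi i, ((x j) ^ 2 - (x i) ^ 2)) ^ 2 := by
    rw [← Finset.prod_pow]
    exact Finset.prod_congr rfl fun i _ => Finset.prod_pow _ _ _
  have h2 : (∏ k : Fin m, ((x k) ^ 2 * Real.exp (-(x k) ^ 2)))
      = (∏ k : Fin m, x k) ^ 2 * ∏ k : Fin m, Real.exp (-(x k) ^ 2) := by
    rw [Finset.prod_mul_distrib, Finset.prod_pow]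
  have hM : (Matrix.of fun i j : Fin m => x i ^ (2 * (j : ℕ) + 1))
      = Matrix.of (fun i j : Fin m => x i * (Matrix.vandermonde fun k => (x k) ^ 2) i j) := by
    ext i j
    simp only [Matrix.of_apply, Matrix.vandermonde_apply]
    rw [pow_add, pow_mul, pow_one, mul_comm]
  have hdet : (Matrix.of fun i j : Fin m => x i ^ (2 * (j : ℕ) + 1)).det
      = (∏ k : Fin m, x k) * ∏ i : Fin m, ∏ j ∈ Finset.Ioi i, ((x j) ^ 2 - (x i) ^ 2) := by
    rw [hM, Matrix.det_mul_column, Matrix.det_vandermonde]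
  have hD : (Matrix.of fun i j : Fin m => x i ^ (2 * (j : ℕ) + 1)).det
      = ∑ σ : Equiv.Perm (Fin m), ((Equiv.Perm.sign σ : ℤ) : ℝ) *
          ∏ i : Fin m, x i ^ (2 * (σ i : ℕ) + 1) := by
    rw [← Matrix.det_transpose, Matrix.det_apply']
    rfl
  calc (∏ i : Fin m, ∏ j ∈ Finset.Ioi i, ((x j) ^ 2 - (x i) ^ 2) ^ 2) *
        ∏ k : Fin m, (x k) ^ 2 * Real.exp (-(x k) ^ 2)
      = ((∏ k : Fin m, x k) * ∏ i : Fin m, ∏ j ∈ Finset.Ioi i, ((x j) ^ 2 - (x i) ^ 2)) ^ 2 *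
          ∏ k : Fin m, Real.exp (-(x k) ^ 2) := by rw [h1, h2]; ring
    _ = (∑ σ : Equiv.Perm (Fin m), ((Equiv.Perm.sign σ : ℤ) : ℝ) *
          ∏ i : Fin m, x i ^ (2 * (σ i : ℕ) + 1)) ^ 2 * ∏ k : Fin m, Real.exp (-(x k) ^ 2) := by
        rw [← hdet, hD]
    _ = ∑ σ : Equiv.Perm (Fin m), ∑ τ : Equiv.Perm (Fin m),
        ((Equiv.Perm.sign σ : ℤ) : ℝ) * ((Equiv.Perm.sign τ : ℤ) : ℝ) *
          ∏ k : Fin m, (x k ^ (2 * ((σ k : ℕ) + (τ k : ℕ) + 1)) * Real.exp (-(x k) ^ 2)) := by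
        rw [sq, Finset.sum_mul_sum, Finset.sum_mul]
        refine Finset.sum_congr rfl fun σ _ => ?_
        rw [Finset.sum_mul]
        refine Finset.sum_congr rfl fun τ _ => ?_
        have hR : (∏ k : Fin m, (x k ^ (2 * ((σ k : ℕ) + (τ k : ℕ) + 1)) *
              Real.exp (-(x k) ^ 2)))
            = (∏ i : Fin m, x i ^ (2 * (σ i : ℕ) + 1)) *
              (∏ i : Fin m, x i ^ (2 * (τ i : ℕ) + 1)) *
                ∏ k : Fin m, Real.exp (-(x k) ^ 2) := by
          rw [← Finset.prod_mul_distrib, ← Finset.prod_mul_distrib]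
          refine Finset.prod_congr rfl fun i _ => ?_
          rw [← pow_add]
          congr 2
          omega
        rw [hR]
        ring
  
theorem main_result (m : ℕ) :
    (∫ x : Fin m → ℝ,
        (∏ i : Fin m, ∏ j ∈ Finset.Ioi i, ((x j) ^ 2 - (x i) ^ 2) ^ 2) *
          ∏ k : Fin m, (x k) ^ 2 * Real.exp (-(x k) ^ 2))
      = (m.factorial : ℝ) * Real.sqrt Real.pi ^ m *
          (∏ j ∈ Finset.Icc 1 m, ((2 * j - 1).factorial : ℝ)) / 2 ^ (m ^ 2) := by
  classical
  have hint : ∀ (e : Fin m → ℕ),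
      Integrable (fun x : Fin m → ℝ => ∏ k : Fin m, (x k ^ (e k) * Real.exp (-(x k) ^ 2))) :=
    fun e => Integrable.fintype_prod (f := fun k (y : ℝ) => y ^ (e k) * Real.exp (-y ^ 2))
      fun k => integrable_pow_exp (e k)
  have step1 : (∫ x : Fin m → ℝ,
        (∏ i : Fin m, ∏ j ∈ Finset.Ioi i, ((x j) ^ 2 - (x i) ^ 2) ^ 2) *
          ∏ k : Fin m, (x k) ^ 2 * Real.exp (-(x k) ^ 2))
      = ∑ σ : Equiv.Perm (Fin m), ∑ τ : Equiv.Perm (Fin m),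
          ((Equiv.Perm.sign σ : ℤ) : ℝ) * ((Equiv.Perm.sign τ : ℤ) : ℝ) *
            ∏ k : Fin m, ∫ y : ℝ, y ^ (2 * ((σ k : ℕ) + (τ k : ℕ) + 1)) * Real.exp (-y ^ 2) := by
    simp only [integrand_eq m]
    rw [integral_finset_sum _ (fun σ _ => integrable_finset_sum _ (fun τ _ =>
      ((hint fun k => 2 * ((σ k : ℕ) + (τ k : ℕ) + 1)).const_mul _)))]
    refine Finset.sum_congr rfl fun σ _ => ?_
    rw [integral_finset_sum _ (fun τ _ =>
      ((hint fun k => 2 * ((σ k : ℕ) + (τ k : ℕ) + 1)).const_mul _))]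
    refine Finset.sum_congr rfl fun τ _ => ?_
    rw [integral_const_mul _ _,
      integral_fintype_prod_volume_eq_prod (ι := Fin m)
        (f := fun k (y : ℝ) => y ^ (2 * ((σ k : ℕ) + (τ k : ℕ) + 1)) * Real.exp (-y ^ 2))]
  rw [step1]
  have step2 : ∀ (σ τ : Equiv.Perm (Fin m)) (k : Fin m),
      (∫ y : ℝ, y ^ (2 * ((σ k : ℕ) + (τ k : ℕ) + 1)) * Real.exp (-y ^ 2))
        = (fun n : ℕ => Real.Gamma ((n : ℝ) + 1 / 2)) ((σ k : ℕ) + (τ k : ℕ) + 1) :=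
    fun σ τ k => moment _
  simp only [step2]
  rw [perm_sum m (fun n : ℕ => Real.Gamma ((n : ℝ) + 1 / 2))]
  have hmat : (Matrix.of fun i j : Fin m =>
        (fun n : ℕ => Real.Gamma ((n : ℝ) + 1 / 2)) ((i : ℕ) + (j : ℕ) + 1))
      = Matrix.of fun i j : Fin m => Real.Gamma ((i : ℝ) + (j : ℝ) + 3 / 2) := by
    ext i j
    simp only [Matrix.of_apply]
    congr 1
    push_cast
    ring
  rw [hmat, det_hankel, vandermonde_nat]
  rw [show (∏ j : Fin m, (((j : ℕ).factorial : ℕ) : ℝ)) *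
        ∏ j : Fin m, Real.Gamma ((j : ℝ) + 3 / 2)
      = ∏ j : Fin m, (((j : ℕ).factorial : ℝ) * Real.Gamma ((j : ℝ) + 3 / 2)) from
    (Finset.prod_mul_distrib).symm]
  rw [show (∏ j : Fin m, (((j : ℕ).factorial : ℝ) * Real.Gamma ((j : ℝ) + 3 / 2)))
      = ∏ j ∈ Finset.range m, ((j.factorial : ℝ) * Real.Gamma ((j : ℝ) + 3 / 2)) from
    Fin.prod_univ_eq_prod_range
      (fun n : ℕ => ((n.factorial : ℕ) : ℝ) * Real.Gamma ((n : ℝ) + 3 / 2)) m]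
  rw [final_prod]
  ring

end SelbergAux3H

/-- Laguerre limit of the Selberg integral with `γ = 1`, `α = 3/2`:
`∫_{ℝ^m} Π_{i<j}(xⱼ² - xᵢ²)² Π_k x_k² e^{-x_k²} dx = m! π^{m/2} 2^{-m²} Π_{j=1}^{m}(2j-1)!`. -/
theorem selberg_laguerre_three_half (m : ℕ) :
    (∫ x : Fin m → ℝ,
        (∏ i : Fin m, ∏ j ∈ Finset.Ioi i, ((x j) ^ 2 - (x i) ^ 2) ^ 2) *
          ∏ k : Fin m, (x k) ^ 2 * Real.exp (-(x k) ^ 2))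
      = (m.factorial : ℝ) * Real.sqrt Real.pi ^ m *
          (∏ j ∈ Finset.Icc 1 m, ((2 * j - 1).factorial : ℝ)) / 2 ^ (m ^ 2) :=
  SelbergAux3H.main_result m
end

section
/- There is a bijection between the symmetric group S_{2R} and the set of equivalence classes of tetrads (σ, τ, s, t) ∈ S_R × S_R × {±1}^R × {±1}^R, where two tetrads are equivalent if they agree up to simultaneously flipping all signs attached to the vertices of any single cycle of σ∘τ⁻¹. In particular, the number of such equivalence classes is (2R)!. -/
/-- A tetrad `(σ, τ, s, t)`: two permutations of `{1,…,R}` and two sign vectors. -/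
def Tetrad (R : ℕ) :=
  Equiv.Perm (Fin R) × Equiv.Perm (Fin R) × (Fin R → ℤˣ) × (Fin R → ℤˣ)

/-- Equivalence of tetrads: same permutations, and the signs agree up to a
global sign flip `ε` which is constant on each cycle of `σ∘τ⁻¹` (flipping
all `s`-signs of the black vertices and all `t`-signs of the white vertices of
that cycle; the white vertex `j` belongs to the cycle of the black vertex `τ⁻¹ j`). -/
def tetradRel (R : ℕ) (w w' : Tetrad R) : Prop :=
  w.1 = w'.1 ∧ w.2.1 = w'.2.1 ∧
    ∃ ε : Fin R → ℤˣ,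
      (∀ i, ε ((w.1 * w.2.1⁻¹) i) = ε i) ∧
      (∀ i, w'.2.2.1 i = ε i * w.2.2.1 i) ∧
      (∀ j, w'.2.2.2 j = ε (w.2.1⁻¹ j) * w.2.2.2 j)


namespace TetradAux

open Equiv Equiv.Perm Finset

variable {n : ℕ}

abbrev SPair (n : ℕ) := (Fin n → ℤˣ) × (Fin n → ℤˣ)

def rel2 (π : Equiv.Perm (Fin n)) (x y : SPair n) : Prop :=
  ∃ ε : Fin n → ℤˣ, (∀ i, ε (π i) = ε i) ∧ (∀ i, y.1 i = ε i * x.1 i) ∧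
    (∀ i, y.2 i = ε i * x.2 i)

lemma rel2_equivalence (π : Equiv.Perm (Fin n)) : Equivalence (rel2 π) where
  refl x := ⟨1, fun _ => rfl, fun i => (one_mul _).symm, fun i => (one_mul _).symm⟩
  symm := by
    rintro x y ⟨ε, hε, h1, h2⟩
    refine ⟨ε⁻¹, fun i => by simp [hε i], fun i => by simp [h1 i, ← mul_assoc], fun i => by simp [h2 i, ← mul_assoc]⟩
  trans := by
    rintro x y z ⟨ε, hε, h1, h2⟩ ⟨δ, hδ, g1, g2⟩
    exact ⟨δ * ε, fun i => by simp [hε i, hδ i],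
      fun i => by simp [g1 i, h1 i, mul_assoc],
      fun i => by simp [g2 i, h2 i, mul_assoc]⟩

def InvT (π : Equiv.Perm (Fin n)) := {ε : Fin n → ℤˣ // ∀ i, ε (π i) = ε i}

instance (π : Equiv.Perm (Fin n)) : Finite (InvT π) := by unfold InvT; infer_instance
instance (π : Equiv.Perm (Fin n)) : Nonempty (InvT π) := ⟨⟨1, fun _ => rfl⟩⟩

noncomputable def Icard (π : Equiv.Perm (Fin n)) : ℕ := Nat.card (InvT π)
noncomputable def Ncard (π : Equiv.Perm (Fin n)) : ℕ := Nat.card (Quot (rel2 π))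

lemma Icard_pos (π : Equiv.Perm (Fin n)) : 0 < Icard π := Nat.card_pos

lemma nat_card_sigma {ι : Type*} [Fintype ι] (β : ι → Type*) [∀ i, Finite (β i)] :
    Nat.card (Σ i, β i) = ∑ i, Nat.card (β i) := by
  letI : ∀ i, Fintype (β i) := fun i => Fintype.ofFinite _
  simp [Nat.card_eq_fintype_card, Fintype.card_sigma]

lemma card_SPair : Nat.card (SPair n) = 4 ^ n := by
  have h2 : Nat.card ℤˣ = 2 := by
    rw [Nat.card_eq_fintype_card, Fintype.card_units_int]
  have hf : Nat.card (Fin n → ℤˣ) = 2 ^ n := by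
    rw [Nat.card_fun, h2, Nat.card_eq_fintype_card, Fintype.card_fin]
  rw [Nat.card_prod, hf, ← mul_pow]; norm_num

/-- orbit fiber equivalence: the set of `x` related to `y` is in bijection with
invariant sign functions. -/
noncomputable def fiberEquiv (π : Equiv.Perm (Fin n)) (y : SPair n) :
    InvT π ≃ {x : SPair n // rel2 π y x} := by
  refine Equiv.ofBijective
    (fun ε => ⟨(ε.1 * y.1, ε.1 * y.2), ε.1, ε.2, fun i => rfl, fun i => rfl⟩) ⟨?_, ?_⟩
  · rintro ⟨ε, hε⟩ ⟨δ, hδ⟩ h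
    have h1 : ε * y.1 = δ * y.1 := congrArg (fun z => z.1.1) h
    apply Subtype.ext; funext i
    have := congrFun h1 i
    simpa using mul_right_cancel this
  · rintro ⟨x, ε, hε, h1, h2⟩
    refine ⟨⟨ε, hε⟩, ?_⟩
    apply Subtype.ext
    refine Prod.ext (funext fun i => ?_) (funext fun i => ?_)
    · exact (h1 i).symm
    · exact (h2 i).symm

lemma NI (π : Equiv.Perm (Fin n)) : Ncard π * Icard π = 4 ^ n := by
  classical
  letI : Fintype (Quot (rel2 π)) := Fintype.ofFinite _
  have key : ∀ q : Quot (rel2 π),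
      Nat.card {x : SPair n // Quot.mk (rel2 π) x = q} = Icard π := by
    refine Quot.ind (fun y => ?_)
    have e1 : {x : SPair n // Quot.mk (rel2 π) x = Quot.mk (rel2 π) y} ≃
        {x : SPair n // rel2 π y x} := by
      refine Equiv.subtypeEquivRight (fun x => ?_)
      constructor
      · intro h
        exact (rel2_equivalence π).symm (((rel2_equivalence π).eqvGen_iff).mp
          (Quot.eqvGen_exact h))
      · intro h
        exact (Quot.sound ((rel2_equivalence π).symm h))
    rw [Nat.card_congr e1, Nat.card_congr (fiberEquiv π y).symm, Icard]
  have := card_SPair (n := n)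
  rw [Nat.card_congr (Equiv.sigmaFiberEquiv (Quot.mk (rel2 π))).symm,
    nat_card_sigma] at this
  simp only [key, Finset.sum_const, Finset.card_univ, smul_eq_mul] at this
  rw [Ncard, Nat.card_eq_fintype_card]
  exact this

end TetradAux
namespace TetradAux

open Equiv Equiv.Perm Finset

variable {n : ℕ}

noncomputable def invZeroEquiv (e : Equiv.Perm (Fin n)) :
    InvT (Equiv.Perm.decomposeFin.symm (0, e)) ≃ ℤˣ × InvT e := by
  set π := Equiv.Perm.decomposeFin.symm ((0 : Fin (n+1)), e) with hπ
  have h0 : π 0 = 0 := Equiv.Perm.decomposeFin_symm_apply_zero 0 e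
  have hs : ∀ x : Fin n, π x.succ = (e x).succ := by
    intro x
    rw [hπ, Equiv.Perm.decomposeFin_symm_apply_succ, Equiv.swap_self, Equiv.refl_apply]
  exact {
    toFun := fun f => (f.1 0, ⟨fun x => f.1 x.succ, fun x => by
      have := f.2 x.succ; rwa [hs] at this⟩)
    invFun := fun ag => ⟨fun i => Fin.cases ag.1 ag.2.1 i, by
      intro i
      induction i using Fin.cases with
      | zero => rw [h0]
      | succ x => rw [hs x]; simp only [Fin.cases_succ]; exact ag.2.2 x⟩
    left_inv := fun f => by
      apply Subtype.ext; funext i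
      induction i using Fin.cases with
      | zero => simp
      | succ x => simp
    right_inv := fun ag => by
      refine Prod.ext (by simp) (Subtype.ext (funext fun x => by simp)) }

noncomputable def invSuccEquiv (e : Equiv.Perm (Fin n)) (j : Fin n) :
    InvT (Equiv.Perm.decomposeFin.symm (j.succ, e)) ≃ InvT e := by
  set π := Equiv.Perm.decomposeFin.symm (j.succ, e) with hπ
  have h0 : π 0 = j.succ := Equiv.Perm.decomposeFin_symm_apply_zero j.succ e
  have hs : ∀ x : Fin n, π x.succ = Equiv.swap 0 j.succ (e x).succ := fun x =>
    Equiv.Perm.decomposeFin_symm_apply_succ e j.succ x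
  have A : ∀ f : InvT π, ∀ x : Fin n, f.1 ((e x).succ) = f.1 x.succ := by
    intro f x
    have h := f.2 x.succ
    rw [hs] at h
    by_cases hx : e x = j
    · rw [hx] at h ⊢
      rw [Equiv.swap_apply_right] at h
      have h0' := f.2 0
      rw [h0] at h0'
      exact h0'.trans h
    · rwa [Equiv.swap_apply_of_ne_of_ne (Fin.succ_ne_zero _)
        (fun hc => hx (Fin.succ_injective _ hc))] at h
  exact {
    toFun := fun f => ⟨fun x => f.1 x.succ, fun x => A f x⟩
    invFun := fun g => ⟨fun i => Fin.cases (g.1 j) g.1 i, by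
      intro i
      induction i using Fin.cases with
      | zero => rw [h0]; simp
      | succ x =>
        rw [hs x]
        by_cases hx : e x = j
        · rw [hx, Equiv.swap_apply_right]
          simp only [Fin.cases_zero, Fin.cases_succ]
          have := g.2 x; rw [hx] at this; exact this
        · rw [Equiv.swap_apply_of_ne_of_ne (Fin.succ_ne_zero _)
            (fun hc => hx (Fin.succ_injective _ hc))]
          simp only [Fin.cases_succ]
          exact g.2 x⟩
    left_inv := fun f => by
      apply Subtype.ext; funext i
      induction i using Fin.cases with
      | zero =>
        simp only [Fin.cases_zero]
        have h0' := f.2 0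
        rw [h0] at h0'
        exact h0'
      | succ x => simp
    right_inv := fun g => Subtype.ext (funext fun x => by simp) }

lemma Icard_zero (e : Equiv.Perm (Fin n)) :
    Icard (Equiv.Perm.decomposeFin.symm (0, e)) = 2 * Icard e := by
  rw [Icard, Nat.card_congr (invZeroEquiv e), Nat.card_prod, Nat.card_eq_fintype_card,
    Fintype.card_units_int, Icard]

lemma Icard_succ (e : Equiv.Perm (Fin n)) (j : Fin n) :
    Icard (Equiv.Perm.decomposeFin.symm (j.succ, e)) = Icard e := by
  rw [Icard, Nat.card_congr (invSuccEquiv e j), Icard]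

lemma Ncard_zero (e : Equiv.Perm (Fin n)) :
    Ncard (Equiv.Perm.decomposeFin.symm (0, e)) = 2 * Ncard e := by
  have h1 := NI (Equiv.Perm.decomposeFin.symm ((0 : Fin (n+1)), e))
  have h2 := NI e
  rw [Icard_zero] at h1
  have key : Ncard (Equiv.Perm.decomposeFin.symm ((0 : Fin (n+1)), e)) * (2 * Icard e)
      = (2 * Ncard e) * (2 * Icard e) := by
    rw [h1]
    have : 2 * Ncard e * (2 * Icard e) = 4 * (Ncard e * Icard e) := by ring
    rw [this, h2, pow_succ]
    ring
  exact Nat.eq_of_mul_eq_mul_right (by have := Icard_pos e; omega) key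
  -- note: 2 * Icard e > 0

lemma Ncard_succ (e : Equiv.Perm (Fin n)) (j : Fin n) :
    Ncard (Equiv.Perm.decomposeFin.symm (j.succ, e)) = 4 * Ncard e := by
  have h1 := NI (Equiv.Perm.decomposeFin.symm (j.succ, e))
  have h2 := NI e
  rw [Icard_succ] at h1
  have key : Ncard (Equiv.Perm.decomposeFin.symm (j.succ, e)) * Icard e
      = (4 * Ncard e) * Icard e := by
    rw [h1, mul_assoc, h2, pow_succ]
    ring
  exact Nat.eq_of_mul_eq_mul_right (Icard_pos e) key

noncomputable def T (n : ℕ) : ℕ := ∑ π : Equiv.Perm (Fin n), Ncard π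

lemma T_zero : T 0 = 1 := by
  letI : Subsingleton (Equiv.Perm (Fin 0)) := ⟨fun a b => Equiv.ext fun x => x.elim0⟩
  rw [T, Fintype.sum_subsingleton _ (1 : Equiv.Perm (Fin 0))]
  have := NI (1 : Equiv.Perm (Fin 0))
  simp only [pow_zero] at this
  exact Nat.eq_one_of_mul_eq_one_right this

lemma T_succ (n : ℕ) : T (n + 1) = (4 * n + 2) * T n := by
  have h := Equiv.sum_comp (Equiv.Perm.decomposeFin (n := n)).symm Ncard
  rw [T, ← h, Fintype.sum_prod_type, Fin.sum_univ_succ]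
  simp only [Ncard_zero, Ncard_succ]
  rw [← Finset.mul_sum, Finset.sum_const, Finset.card_univ, Fintype.card_fin,
    ← Finset.mul_sum, smul_eq_mul, ← T]
  ring

lemma factorial_T (n : ℕ) : n.factorial * T n = (2 * n).factorial := by
  induction n with
  | zero => simp [T_zero]
  | succ n ih =>
    rw [T_succ, Nat.factorial_succ]
    have h1 : (n + 1) * n.factorial * ((4 * n + 2) * T n)
        = ((n + 1) * (4 * n + 2)) * (n.factorial * T n) := by ring
    rw [h1, ih]
    have h2 : 2 * (n + 1) = (2 * n + 1) + 1 := by ring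
    rw [h2, Nat.factorial_succ, Nat.factorial_succ]
    ring

end TetradAux
namespace TetradAux

open Equiv Equiv.Perm Finset

abbrev X (R : ℕ) := (Equiv.Perm (Fin R) × Equiv.Perm (Fin R)) × SPair R

def brel (R : ℕ) (x y : X R) : Prop :=
  x.1 = y.1 ∧ rel2 (x.1.1 * x.1.2⁻¹) x.2 y.2

def Phi (R : ℕ) : Tetrad R ≃ X R where
  toFun w := ((w.1, w.2.1), (w.2.2.1, fun i => w.2.2.2 (w.2.1 i)))
  invFun x := (x.1.1, x.1.2, x.2.1, fun j => x.2.2 (x.1.2⁻¹ j))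
  left_inv w := by
    obtain ⟨σ, τ, s, t⟩ := w
    refine Prod.ext rfl (Prod.ext rfl (Prod.ext rfl (funext fun j => ?_)))
    simp
  right_inv x := by
    obtain ⟨⟨σ, τ⟩, s, u⟩ := x
    refine Prod.ext rfl (Prod.ext rfl (funext fun i => ?_))
    simp

lemma tetradRel_iff (R : ℕ) (w w' : Tetrad R) :
    tetradRel R w w' ↔ brel R (Phi R w) (Phi R w') := by
  obtain ⟨σ, τ, s, t⟩ := w
  obtain ⟨σ', τ', s', t'⟩ := w'
  constructor
  · rintro ⟨h1, h2, ε, hε, hs, ht⟩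
    dsimp [tetradRel] at h1 h2 hε hs ht
    subst h1; subst h2
    exact ⟨rfl, ε, hε, hs, fun i => by
      have := ht (τ i); rwa [Equiv.symm_apply_apply] at this⟩
  · rintro ⟨hp, ε, hε, hs, hu⟩
    have h1 : σ = σ' := congrArg Prod.fst hp
    have h2 : τ = τ' := congrArg Prod.snd hp
    subst h1; subst h2
    simp only [Phi, Equiv.coe_fn_mk] at hε hs hu
    exact ⟨rfl, rfl, ε, hε, hs, fun j => by
      have := hu (τ⁻¹ j)
      change t' (τ (τ⁻¹ j)) = ε (τ⁻¹ j) * t (τ (τ⁻¹ j)) at this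
      rwa [Equiv.Perm.inv_def, Equiv.apply_symm_apply] at this⟩

def quotEquivSigma (R : ℕ) :
    Quot (brel R) ≃ Σ p : Equiv.Perm (Fin R) × Equiv.Perm (Fin R),
      Quot (rel2 (p.1 * p.2⁻¹)) where
  toFun := Quot.lift (fun x => ⟨x.1, Quot.mk _ x.2⟩) (by
    rintro ⟨p, b⟩ ⟨p', b'⟩ ⟨h1, h2⟩
    dsimp at h1 h2 ⊢
    subst h1
    exact congrArg (fun q => (⟨p, q⟩ : Σ p : _ × _, Quot (rel2 (p.1 * p.2⁻¹))))
      (Quot.sound h2))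
  invFun := fun pq => Quot.lift (fun b => Quot.mk (brel R) (pq.1, b))
    (fun b b' h => Quot.sound ⟨rfl, h⟩) pq.2
  left_inv := by
    refine Quot.ind (fun x => ?_)
    rfl
  right_inv := by
    rintro ⟨p, q⟩
    induction q using Quot.ind
    rfl

lemma card_quot_tetrad (R : ℕ) :
    Nat.card (Quot (tetradRel R)) = (2 * R).factorial := by
  classical
  have E : Quot (tetradRel R) ≃ Σ p : Equiv.Perm (Fin R) × Equiv.Perm (Fin R),
      Quot (rel2 (p.1 * p.2⁻¹)) :=
    (Quot.congr (Phi R) (tetradRel_iff R)).trans (quotEquivSigma R)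
  rw [Nat.card_congr E, nat_card_sigma]
  have step : ∀ σ : Equiv.Perm (Fin R),
      (∑ τ : Equiv.Perm (Fin R), Ncard (σ * τ⁻¹)) = T R := by
    intro σ
    have := Equiv.sum_comp ((Equiv.inv (Equiv.Perm (Fin R))).trans
      (Equiv.mulLeft σ)) Ncard
    simpa [T] using this
  calc (∑ p : Equiv.Perm (Fin R) × Equiv.Perm (Fin R),
        Nat.card (Quot (rel2 (p.1 * p.2⁻¹))))
      = ∑ σ : Equiv.Perm (Fin R), ∑ τ : Equiv.Perm (Fin R), Ncard (σ * τ⁻¹) := by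
        rw [Fintype.sum_prod_type]; rfl
    _ = ∑ _σ : Equiv.Perm (Fin R), T R := by
        exact Finset.sum_congr rfl fun σ _ => step σ
    _ = R.factorial * T R := by
        rw [Finset.sum_const, Finset.card_univ, Fintype.card_perm, Fintype.card_fin,
          smul_eq_mul]
    _ = (2 * R).factorial := factorial_T R

end TetradAux


/-- There is a bijection between `S_{2R}` and the set of equivalence classes of
tetrads; in particular the number of equivalence classes is `(2R)!`. -/
theorem tetrad_classes_equiv_perm (R : ℕ) :
    Nonempty (Equiv.Perm (Fin (2 * R)) ≃ Quot (tetradRel R)) ∧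
    Nat.card (Quot (tetradRel R)) = (2 * R).factorial := by
  have hcard := TetradAux.card_quot_tetrad R
  haveI : Finite (Tetrad R) := Finite.of_equiv _ (TetradAux.Phi R).symm
  refine ⟨Finite.card_eq.mp ?_, hcard⟩
  rw [hcard, Nat.card_eq_fintype_card, Fintype.card_perm, Fintype.card_fin]
end
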